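/- Let G be a simple graph with no ds-completable card, let i, j be disjoint vertex sets with j ⊆ V∖i, and suppose j contains no bad vertex (no vertex of j has degree d such that some vertex of G has degree d−1). Then the number of edges between i and j is at most m_i − n_i, where m_i is the sum of degrees of vertices in i and n_i = |i|. -/

import Mathlib

open SimpleGraph Finset
open scoped Classical

variable {V : Type*}

/-- The degree of a vertex `u` in a simple graph `G`. -/
noncomputable def deg (G : SimpleGraph V) (u : V) : ℕ := (G.neighborSet u).ncard

/-- The degree of `u` in the card `G − v` (the vertex-deleted subgraph at `v`). -/
noncomputable def cardDeg (G : SimpleGraph V) (v u : V) : ℕ := (G.neighborSet u \ {v}).ncard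

/-- The card `G − v` is ds-completable: for each degree `d`, the vertices of degree `d`
in `G − v` are either all neighbours of `v` in `G` or all non-neighbours of `v` in `G`. -/
def DsCompletable (G : SimpleGraph V) (v : V) : Prop :=
  ∀ d : ℕ, (∀ u, u ≠ v → cardDeg G v u = d → G.Adj v u) ∨
           (∀ u, u ≠ v → cardDeg G v u = d → ¬ G.Adj v u)

/-- A vertex is bad if the graph contains a vertex of degree one less. -/
def Bad (G : SimpleGraph V) (v : V) : Prop := ∃ w, deg G w + 1 = deg G v

/-- A vertex is dull if the graph contains a vertex of degree one more. -/
def Dull (G : SimpleGraph V) (v : V) : Prop := ∃ w, deg G w = deg G v + 1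

/-- ε(s,t): the number of stubs on `s` used by edges from `s` to `t`
(for disjoint `s`, `t` this is the number of edges between them; for `s = t`
it is twice the number of edges inside `s`). -/
noncomputable def stubs (G : SimpleGraph V) (s t : Finset V) : ℕ :=
  ((s ×ˢ t).filter fun p => G.Adj p.1 p.2).card

/-- A vertex set is neighbourly if no vertex outside the set has a degree one less
than that of a vertex in the set. -/
def Neighbourly (G : SimpleGraph V) (K : Finset V) : Prop :=
  ∀ u ∉ K, ∀ w ∈ K, deg G u + 1 ≠ deg G w

/-- A vertex set is `d`-neighbourly if it contains a vertex `v` of degree `d` such that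
no vertex outside the set has a degree one less than that of any member other than `v`. -/
def DNeighbourly (G : SimpleGraph V) (d : ℕ) (K : Finset V) : Prop :=
  ∃ v ∈ K, deg G v = d ∧ ∀ u ∉ K, ∀ w ∈ K, w ≠ v → deg G u + 1 ≠ deg G w

/-- In a graph with no ds-completable card, the edges from `i` to a good set `j` number at
most `m_i − n_i`. -/
lemma cardDeg_adj [Fintype V] {G : SimpleGraph V} {v u : V} (h : G.Adj v u) :
    cardDeg G v u + 1 = deg G u := by
  have hv : v ∈ G.neighborSet u := h.symm
  exact Set.ncard_diff_singleton_add_one hv ((G.neighborSet u).toFinite)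

lemma cardDeg_nonadj {G : SimpleGraph V} {v u : V} (h : ¬ G.Adj v u) :
    cardDeg G v u = deg G u := by
  unfold cardDeg deg
  exact congrArg Set.ncard (Set.diff_singleton_eq_self (fun hv => h (G.adj_symm hv)))

lemma exists_neighbor_notin [Fintype V] (G : SimpleGraph V)
    (h : ∀ v : V, ¬ DsCompletable G v) (j : Finset V)
    (hj : ∀ w ∈ j, ¬ Bad G w) (v : V) :
    ∃ w, G.Adj v w ∧ w ∉ j := by
  by_contra hc
  push_neg at hc
  apply h v
  intro d
  rcases Classical.em (∃ u, u ≠ v ∧ cardDeg G v u = d ∧ ¬ G.Adj v u) with ⟨u', _, hdu', hna⟩ | hno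
  · right
    intro u _ hdu hadj
    have hdegu : deg G u = d + 1 := by
      have := cardDeg_adj hadj; omega
    have hdegu' : deg G u' = d := by rw [← cardDeg_nonadj hna]; exact hdu'
    exact hj u (hc u hadj) ⟨u', by omega⟩
  · left
    intro u hu hdu
    by_contra hadj
    exact hno ⟨u, hu, hdu, hadj⟩

theorem stmt11 [Fintype V] (G : SimpleGraph V)
    (h : ∀ v : V, ¬ DsCompletable G v) (i j : Finset V) (hd : Disjoint i j)
    (hj : ∀ w ∈ j, ¬ Bad G w) :
    stubs G i j + i.card ≤ ∑ v ∈ i, deg G v := by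
  classical
  have key : ∀ v ∈ i, (j.filter (G.Adj v)).card + 1 ≤ deg G v := by
    intro v _
    obtain ⟨w, hw, hwj⟩ := exists_neighbor_notin G h j hj v
    have hsub : insert w (j.filter (G.Adj v)) ⊆ G.neighborFinset v := by
      intro x hx
      rcases Finset.mem_insert.1 hx with rfl | hx
      · exact G.mem_neighborFinset v x |>.2 hw
      · exact G.mem_neighborFinset v x |>.2 (Finset.mem_filter.1 hx).2
    have hcard := Finset.card_le_card hsub
    rw [Finset.card_insert_of_notMem (fun hx => hwj (Finset.mem_filter.1 hx).1)] at hcard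
    have : deg G v = (G.neighborFinset v).card := by
      unfold deg
      rw [Set.ncard_eq_toFinset_card', ← G.neighborFinset_def]
    omega
  have hstubs : stubs G i j = ∑ v ∈ i, (j.filter (G.Adj v)).card := by
    unfold stubs
    rw [Finset.card_filter, Finset.sum_product]
    exact Finset.sum_congr rfl (fun v _ => (Finset.card_filter _ _).symm)
  rw [hstubs]
  calc ∑ v ∈ i, ((j.filter (G.Adj v)).card) + i.card
      = ∑ v ∈ i, ((j.filter (G.Adj v)).card + 1) := by
        rw [Finset.sum_add_distrib, Finset.sum_const, smul_eq_mul, mul_one]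
    _ ≤ ∑ v ∈ i, deg G v := Finset.sum_le_sum key
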